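/- If L_n^H(G) is Hamiltonian for some n ≥ 3, then the H-colored multigraph G has a closed Euler dynamic H-trail. -/

import Mathlib

namespace DynH

/-- A multigraph without loops: each edge `e` has two distinct endpoints
`G.fst e` and `G.snd e`. Parallel edges are allowed since `E` is an abstract
edge type. -/
structure Multigraph (V E : Type) where
  fst : E → V
  snd : E → V
  loopless : ∀ e, fst e ≠ snd e

variable {V E C : Type}

namespace Multigraph

/-- The vertex `x` is incident with the edge `e`. -/
def inc (G : Multigraph V E) (x : V) (e : E) : Prop := G.fst e = x ∨ G.snd e = x

/-- The edge `e` joins the vertices `x` and `y`. -/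
def joins (G : Multigraph V E) (e : E) (x y : V) : Prop :=
  (G.fst e = x ∧ G.snd e = y) ∨ (G.fst e = y ∧ G.snd e = x)

/-- `e` and `g` have the same pair of end vertices. -/
def parallel (G : Multigraph V E) (e g : E) : Prop :=
  (G.fst e = G.fst g ∧ G.snd e = G.snd g) ∨ (G.fst e = G.snd g ∧ G.snd e = G.fst g)

end Multigraph

instance Multigraph.decInc (G : Multigraph V E) [DecidableEq V] :
    ∀ (x : V) (e : E), Decidable (G.inc x e) := fun x e => by
  unfold Multigraph.inc; infer_instance

/-- The underlying simple graph of a multigraph (used to express connectedness). -/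
def SupportGraph (G : Multigraph V E) : SimpleGraph V where
  Adj x y := x ≠ y ∧ ∃ e, G.joins e x y
  symm := by
    constructor
    rintro x y ⟨hxy, e, he⟩
    exact ⟨hxy.symm, e, he.symm⟩
  loopless := ⟨fun x h => h.1 rfl⟩

/-- Vertices of `L_2^H(G)`: the incidences `f(x,e)`. -/
def L2V (G : Multigraph V E) : Type := {p : V × E // G.inc p.1 p.2}

instance (G : Multigraph V E) [DecidableEq V] [DecidableEq E] : DecidableEq (L2V G) := by
  unfold L2V; infer_instance

instance (G : Multigraph V E) [Fintype V] [Fintype E] [DecidableEq V] : Fintype (L2V G) := by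
  unfold L2V; infer_instance

/-- Adjacency of `L_2^H(G)` (one-sided; it is symmetrized below, which changes
nothing when `adjH` is symmetric). -/
def L2Adj (G : Multigraph V E) (adjH : C → C → Prop) (c : E → C) (p q : L2V G) : Prop :=
  (p.val.2 = q.val.2 ∧ p.val.1 ≠ q.val.1)
  ∨ (p.val.1 = q.val.1 ∧ p.val.2 ≠ q.val.2 ∧ adjH (c p.val.2) (c q.val.2))
  ∨ (p.val.1 ≠ q.val.1 ∧ p.val.2 ≠ q.val.2 ∧ G.parallel p.val.2 q.val.2)

/-- The auxiliary simple graph `L_2^H(G)`. -/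
def L2Graph (G : Multigraph V E) (adjH : C → C → Prop) (c : E → C) :
    SimpleGraph (L2V G) where
  Adj p q := L2Adj G adjH c p q ∨ L2Adj G adjH c q p
  symm := ⟨fun _ _ h => Or.symm h⟩
  loopless := ⟨fun p h => by
    rcases h with h | h <;> rcases h with ⟨_, h⟩ | ⟨_, h, _⟩ | ⟨h, _⟩ <;> exact h rfl⟩

/-- The joint matching `M_J = { f(x,e)f(y,e) : e = xy ∈ E(G) }` of `L_2^H(G)`. -/
def MJ (G : Multigraph V E) : Set (Sym2 (L2V G)) :=
  {s | ∃ p q : L2V G, s = s(p, q) ∧ p ≠ q ∧ p.val.2 = q.val.2}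

/-- A matching of a simple graph, given as a set of edges. -/
def IsMatchingSet {α : Type} (Gr : SimpleGraph α) (M : Set (Sym2 α)) : Prop :=
  M ⊆ Gr.edgeSet ∧ ∀ v : α, ∀ s ∈ M, ∀ t ∈ M, v ∈ s → v ∈ t → s = t

/-- A perfect matching of a simple graph, given as a set of edges. -/
def IsPerfectMatchingSet {α : Type} (Gr : SimpleGraph α) (M : Set (Sym2 α)) : Prop :=
  IsMatchingSet Gr M ∧ ∀ v : α, ∃ s ∈ M, v ∈ s

/-- Every entry `(x, y, e)` of the list records a traversal of an edge `e`
joining `x` and `y` (from `x` to `y`). -/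
def GoodEntries (G : Multigraph V E) (L : List (V × V × E)) : Prop :=
  ∀ t ∈ L, G.joins t.2.2 t.1 t.2.1

/-- The list of edges underlying a list of edge traversals. -/
def edgesOf (L : List (V × V × E)) : List E := L.map fun t => t.2.2

/-- Allowed consecutive pair in a dynamic `H`-trail: either a transition through a
common vertex with colors adjacent in `H`, or a lane change between parallel edges. -/
def DynStep (G : Multigraph V E) (adjH : C → C → Prop) (c : E → C)
    (a b : V × V × E) : Prop :=
  (a.2.1 = b.1 ∧ adjH (c a.2.2) (c b.2.2))
  ∨ (a.1 = b.1 ∧ a.2.1 = b.2.1 ∧ a.2.2 ≠ b.2.2 ∧ G.parallel a.2.2 b.2.2)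

/-- Allowed consecutive pair in an `H`-trail: transition through a common vertex
with colors adjacent in `H`. -/
def HStep (adjH : C → C → Prop) (c : E → C) (a b : V × V × E) : Prop :=
  a.2.1 = b.1 ∧ adjH (c a.2.2) (c b.2.2)

/-- A closed dynamic `H`-trail, encoded as the cyclic list of its edge traversals. -/
def IsClosedDynHTrail (G : Multigraph V E) (adjH : C → C → Prop) (c : E → C)
    (L : List (V × V × E)) : Prop :=
  L ≠ [] ∧ (edgesOf L).Nodup ∧ GoodEntries G L ∧
    ∀ p ∈ L.zip (L.rotate 1), DynStep G adjH c p.1 p.2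

/-- A closed `H`-trail, encoded as the cyclic list of its edge traversals. -/
def IsClosedHTrail (G : Multigraph V E) (adjH : C → C → Prop) (c : E → C)
    (L : List (V × V × E)) : Prop :=
  L ≠ [] ∧ (edgesOf L).Nodup ∧ GoodEntries G L ∧
    ∀ p ∈ L.zip (L.rotate 1), HStep adjH c p.1 p.2

/-- A (non-closed) dynamic `H`-trail. -/
def IsDynHTrail (G : Multigraph V E) (adjH : C → C → Prop) (c : E → C)
    (L : List (V × V × E)) : Prop :=
  L ≠ [] ∧ (edgesOf L).Nodup ∧ GoodEntries G L ∧
    ∀ p ∈ L.zip L.tail, DynStep G adjH c p.1 p.2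

/-- A (non-closed) `H`-trail. -/
def IsHTrail (G : Multigraph V E) (adjH : C → C → Prop) (c : E → C)
    (L : List (V × V × E)) : Prop :=
  L ≠ [] ∧ (edgesOf L).Nodup ∧ GoodEntries G L ∧
    ∀ p ∈ L.zip L.tail, HStep adjH c p.1 p.2

/-- A cycle in `L_2^H(G)` (as a cyclic list of distinct vertices) which alternates
between edges of the joint matching `M_J` (at even positions) and edges of
`E(L_2^H(G)) \ M_J` (at odd positions). -/
def IsAltCycle (G : Multigraph V E) (adjH : C → C → Prop) (c : E → C)
    (vs : List (L2V G)) : Prop :=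
  vs ≠ [] ∧ vs.Nodup ∧ 3 ≤ vs.length ∧
    ∀ k : Fin vs.length,
      (L2Graph G adjH c).Adj (vs.get k)
        (vs.get ⟨(k.val + 1) % vs.length, Nat.mod_lt _ (Nat.lt_of_le_of_lt (Nat.zero_le _) k.isLt)⟩) ∧
      (s(vs.get k,
          vs.get ⟨(k.val + 1) % vs.length,
            Nat.mod_lt _ (Nat.lt_of_le_of_lt (Nat.zero_le _) k.isLt)⟩) ∈ MJ G ↔ k.val % 2 = 0)

/-- The simple graph `G_x` on the edges of `G` incident with `x`; two such edges are
adjacent iff their colors are adjacent in `H`. (Symmetrized; this changes nothing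
when `adjH` is symmetric.) -/
def GxGraph (G : Multigraph V E) (adjH : C → C → Prop) (c : E → C) (x : V) :
    SimpleGraph {e : E // G.inc x e} where
  Adj a b := a ≠ b ∧ (adjH (c a.val) (c b.val) ∨ adjH (c b.val) (c a.val))
  symm := ⟨by rintro a b ⟨hab, h⟩; exact ⟨hab.symm, h.symm⟩⟩
  loopless := ⟨fun a h => h.1 rfl⟩

end DynH
namespace DynH

variable {V E C : Type}

/-- Adjacency for the auxiliary graph `L_n^H(G)` (`n ≥ 2`).  Its vertices are the
incidences `f(x,e)` together with, for each edge `e`, the `n - 2` intermediate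
vertices of the subdividing path.  (One-sided relation; symmetrized in `LnGraph`.) -/
def LnAdj (G : Multigraph V E) (adjH : C → C → Prop) (c : E → C) (n : ℕ) :
    (L2V G ⊕ E × Fin (n - 2)) → (L2V G ⊕ E × Fin (n - 2)) → Prop
  | Sum.inl p, Sum.inl q =>
      (p.val.1 = q.val.1 ∧ p.val.2 ≠ q.val.2 ∧ adjH (c p.val.2) (c q.val.2))
      ∨ (p.val.1 ≠ q.val.1 ∧ p.val.2 ≠ q.val.2 ∧ G.parallel p.val.2 q.val.2)
      ∨ (n = 2 ∧ p.val.2 = q.val.2 ∧ p.val.1 ≠ q.val.1)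
  | Sum.inl p, Sum.inr gi =>
      p.val.2 = gi.1 ∧
        ((p.val.1 = G.fst gi.1 ∧ gi.2.val = 0) ∨ (p.val.1 = G.snd gi.1 ∧ gi.2.val = n - 3))
  | Sum.inr gi, Sum.inl p =>
      p.val.2 = gi.1 ∧
        ((p.val.1 = G.fst gi.1 ∧ gi.2.val = 0) ∨ (p.val.1 = G.snd gi.1 ∧ gi.2.val = n - 3))
  | Sum.inr gi, Sum.inr gj =>
      gi.1 = gj.1 ∧ (gi.2.val + 1 = gj.2.val ∨ gj.2.val + 1 = gi.2.val)

/-- The auxiliary simple graph `L_n^H(G)`. -/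
def LnGraph (G : Multigraph V E) (adjH : C → C → Prop) (c : E → C) (n : ℕ) :
    SimpleGraph (L2V G ⊕ E × Fin (n - 2)) where
  Adj a b := LnAdj G adjH c n a b ∨ LnAdj G adjH c n b a
  symm := ⟨fun _ _ h => Or.symm h⟩
  loopless := ⟨fun a h => by
    rcases a with p | gi <;>
      rcases h with h | h <;> simp [LnAdj] at h <;> omega⟩

end DynH


namespace DynH

lemma walk_getVert_eq_support_getElem {α : Type} {Gr : SimpleGraph α} {u v : α}
    (p : Gr.Walk u v) (i : ℕ) (h : i < p.support.length) :
    p.getVert i = p.support[i] := by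
  induction p generalizing i with
  | nil =>
    have h0 : i = 0 := Nat.lt_one_iff.mp (by simpa using h)
    subst h0; simp
  | cons hadj q ih =>
    match i with
    | 0 => simp
    | (j+1) =>
      simp only [SimpleGraph.Walk.support_cons] at h ⊢
      rw [List.getElem_cons_succ]
      exact ih j (by simpa using h)

lemma exists_cycFn {α : Type} [DecidableEq α] [Fintype α] {Gr : SimpleGraph α}
    (h : Gr.IsHamiltonian) (hcard : Fintype.card α ≠ 1) :
    ∃ (F : ℕ → α), (∀ k, Gr.Adj (F k) (F (k+1))) ∧
      (∀ k l, F k = F l ↔ k % Fintype.card α = l % Fintype.card α) ∧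
      (∀ w, ∃ k, F k = w) := by
  obtain ⟨a, p, hp⟩ := h hcard
  have hlen : p.length = Fintype.card α := hp.length_eq
  have hN : 0 < p.length := by
    rw [hlen]; exact Fintype.card_pos_iff.mpr ⟨a⟩
  set N := p.length with hNdef
  -- injectivity of getVert on [0, N)
  have hinj : ∀ i j, i < N → j < N → p.getVert i = p.getVert j → i = j := by
    intro i j hi hj hij
    have hsl : p.support.length = N + 1 := by
      rw [SimpleGraph.Walk.length_support]
    have hgi : p.getVert i = p.support[i]'(by omega) :=
      walk_getVert_eq_support_getElem p i (by omega)
    have hgj : p.getVert j = p.support[j]'(by omega) :=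
      walk_getVert_eq_support_getElem p j (by omega)
    -- support.dropLast is nodup
    have htail : p.support = a :: p.support.tail := SimpleGraph.Walk.support_eq_cons p
    have hwsnodup : p.support.tail.Nodup := hp.1.2
    have hlastt : p.support.getLast (by simp) = a := SimpleGraph.Walk.getLast_support p
    have htne : p.support.tail ≠ [] := by
      intro hnil
      have hst := congrArg List.length htail
      rw [hnil] at hst
      simp only [List.length_cons, List.length_nil] at hst
      omega
    have hdl : p.support.dropLast.Nodup := by
      have htl : p.support.dropLast = a :: p.support.tail.dropLast := by
        conv_lhs => rw [htail]
        rw [List.dropLast_cons_of_ne_nil htne]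
      have h2 : p.support.tail.dropLast.Nodup := hwsnodup.sublist (List.dropLast_sublist _)
      rw [htl]
      refine List.nodup_cons.2 ⟨?_, h2⟩
      -- a ∉ p.support.tail.dropLast
      intro hmem
      have hlast2 : p.support.tail.getLast htne = a := by
        rw [List.getLast_tail]; exact hlastt
      have hsplit2 := List.dropLast_append_getLast htne
      rw [hlast2] at hsplit2
      rw [← hsplit2] at hwsnodup
      rcases List.nodup_append.1 hwsnodup with ⟨_, _, hdisj⟩
      exact hdisj _ hmem _ (by simp) rfl
    -- now use nodup of dropLast
    have hdll : p.support.dropLast.length = N := by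
      rw [List.length_dropLast, hsl]; omega
    have e1 : p.support.dropLast[i]'(by omega) = p.support.dropLast[j]'(by omega) := by
      rw [List.getElem_dropLast, List.getElem_dropLast, ← hgi, ← hgj]
      exact hij
    exact hdl.getElem_inj_iff.1 e1
  refine ⟨fun k => p.getVert (k % N), ?_, ?_, ?_⟩
  · intro k
    show Gr.Adj (p.getVert (k % N)) (p.getVert ((k+1) % N))
    have hi : k % N < N := Nat.mod_lt _ hN
    have hadj := p.adj_getVert_succ hi
    rcases Nat.lt_or_ge (k % N + 1) N with hlt | hge
    · have h2 : (k+1) % N = k % N + 1 := by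
        conv_lhs => rw [← Nat.mod_add_mod]
        exact Nat.mod_eq_of_lt hlt
      rw [h2]; exact hadj
    · have heq : k % N + 1 = N := by omega
      have h2 : (k+1) % N = 0 := by
        conv_lhs => rw [← Nat.mod_add_mod]
        rw [heq, Nat.mod_self]
      rw [h2]
      have : p.getVert (k % N + 1) = p.getVert 0 := by
        rw [heq, SimpleGraph.Walk.getVert_length, SimpleGraph.Walk.getVert_zero]
      rw [this] at hadj
      exact hadj
  · intro k l
    show p.getVert (k % N) = p.getVert (l % N) ↔ _
    rw [← hlen]
    constructor
    · intro hkl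
      exact hinj _ _ (Nat.mod_lt _ hN) (Nat.mod_lt _ hN) hkl
    · intro hkl; rw [hkl]
  · intro w
    have hw := hp.mem_support w
    obtain ⟨i, hiw, hile⟩ := SimpleGraph.Walk.mem_support_iff_exists_getVert.1 hw
    rcases Nat.lt_or_ge i N with hlt | hge
    · exact ⟨i, by show p.getVert (i % N) = w; rw [Nat.mod_eq_of_lt hlt]; exact hiw⟩
    · have hiN : i = N := by omega
      subst hiN
      refine ⟨0, ?_⟩
      show p.getVert (0 % N) = w
      rw [Nat.zero_mod, SimpleGraph.Walk.getVert_zero, ← hiw, SimpleGraph.Walk.getVert_length]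

end DynH
namespace DynH

section Aux

variable {V E C : Type}

lemma parallel_symm {G : Multigraph V E} {e g : E} (h : G.parallel e g) : G.parallel g e := by
  rcases h with ⟨h1, h2⟩ | ⟨h1, h2⟩
  · exact Or.inl ⟨h1.symm, h2.symm⟩
  · exact Or.inr ⟨h2.symm, h1.symm⟩

lemma joins_ne {G : Multigraph V E} {e : E} {x y : V} (h : G.joins e x y) : x ≠ y := by
  rcases h with ⟨h1, h2⟩ | ⟨h1, h2⟩
  · rw [← h1, ← h2]; exact G.loopless e
  · rw [← h1, ← h2]; exact (G.loopless e).symm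

lemma joins_symm {G : Multigraph V E} {e : E} {x y : V} (h : G.joins e x y) : G.joins e y x := by
  rcases h with ⟨h1, h2⟩ | ⟨h1, h2⟩
  · exact Or.inr ⟨h1, h2⟩
  · exact Or.inl ⟨h1, h2⟩

lemma mem_of_joins {G : Multigraph V E} {e : E} {x y z : V} (h : G.joins e x y)
    (hz : G.inc z e) : z = x ∨ z = y := by
  rcases h with ⟨h1, h2⟩ | ⟨h1, h2⟩ <;> rcases hz with hz | hz
  · exact Or.inl (hz.symm.trans h1)
  · exact Or.inr (hz.symm.trans h2)
  · exact Or.inr (hz.symm.trans h1)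
  · exact Or.inl (hz.symm.trans h2)

lemma adj_inl_inl {G : Multigraph V E} {adjH : C → C → Prop} {c : E → C} {n : ℕ}
    (hH : Symmetric adjH) (hn : 3 ≤ n) {p q : L2V G}
    (h : (LnGraph G adjH c n).Adj (Sum.inl p) (Sum.inl q)) :
    p.val.2 ≠ q.val.2 ∧
      ((p.val.1 = q.val.1 ∧ adjH (c p.val.2) (c q.val.2)) ∨
       (p.val.1 ≠ q.val.1 ∧ G.parallel p.val.2 q.val.2)) := by
  change LnAdj G adjH c n _ _ ∨ LnAdj G adjH c n _ _ at h
  rcases h with h | h <;> simp only [LnAdj] at h <;>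
    rcases h with ⟨h1, h2, h3⟩ | ⟨h1, h2, h3⟩ | ⟨h1, h2, h3⟩
  · exact ⟨h2, Or.inl ⟨h1, h3⟩⟩
  · exact ⟨h2, Or.inr ⟨h1, h3⟩⟩
  · omega
  · exact ⟨Ne.symm h2, Or.inl ⟨h1.symm, hH h3⟩⟩
  · exact ⟨Ne.symm h2, Or.inr ⟨Ne.symm h1, parallel_symm h3⟩⟩
  · omega

lemma adj_inl_inr {G : Multigraph V E} {adjH : C → C → Prop} {c : E → C} {n : ℕ}
    {p : L2V G} {g : E} {j : Fin (n - 2)}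
    (h : (LnGraph G adjH c n).Adj (Sum.inl p) (Sum.inr (g, j))) :
    p.val.2 = g ∧ ((p.val.1 = G.fst g ∧ j.val = 0) ∨ (p.val.1 = G.snd g ∧ j.val = n - 3)) := by
  change LnAdj G adjH c n _ _ ∨ LnAdj G adjH c n _ _ at h
  rcases h with h | h <;> simp only [LnAdj] at h <;> exact h

lemma adj_inr_inr {G : Multigraph V E} {adjH : C → C → Prop} {c : E → C} {n : ℕ}
    {e g : E} {i : Fin (n - 2)} {j : Fin (n - 2)}
    (h : (LnGraph G adjH c n).Adj (Sum.inr (e, i)) (Sum.inr (g, j))) :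
    e = g ∧ (i.val + 1 = j.val ∨ j.val + 1 = i.val) := by
  change LnAdj G adjH c n _ _ ∨ LnAdj G adjH c n _ _ at h
  rcases h with h | h <;> simp only [LnAdj] at h
  · exact ⟨h.1, h.2⟩
  · exact ⟨h.1.symm, h.2.symm⟩

end Aux

end DynH
namespace DynH

section Aux2

variable {V E C : Type}

/-- The incidences of a loopless multigraph biject with `E × Bool`. -/
def L2VEquiv (G : Multigraph V E) [DecidableEq V] : L2V G ≃ E × Bool where
  toFun p := (p.val.2, decide (G.fst p.val.2 = p.val.1))
  invFun x := if x.2 then ⟨(G.fst x.1, x.1), Or.inl rfl⟩ else ⟨(G.snd x.1, x.1), Or.inr rfl⟩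
  left_inv p := by
    obtain ⟨⟨x, e⟩, hp⟩ := p
    by_cases h : G.fst e = x
    · simp [h]; rfl
    · have h2 : G.snd e = x := by rcases hp with h' | h'; exact absurd h' h; exact h'
      simp [h, h2]; rfl
  right_inv x := by
    obtain ⟨e, b⟩ := x
    cases b
    · simp only [if_neg Bool.false_ne_true, Bool.false_eq_true, if_false]
      simp [G.loopless e]
    · simp

lemma card_L2V (G : Multigraph V E) [DecidableEq V] [Fintype V] [Fintype E] :
    Fintype.card (L2V G) = 2 * Fintype.card E := by
  rw [Fintype.card_congr (L2VEquiv G), Fintype.card_prod, Fintype.card_bool]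
  ring

lemma card_W (G : Multigraph V E) [DecidableEq V] [DecidableEq E] [Fintype V] [Fintype E]
    {n : ℕ} (hn : 2 ≤ n) :
    Fintype.card (L2V G ⊕ E × Fin (n - 2)) = n * Fintype.card E := by
  rw [Fintype.card_sum, card_L2V, Fintype.card_prod, Fintype.card_fin]
  have : n - 2 + 2 = n := by omega
  nlinarith [Fintype.card E, this]

end Aux2

end DynH
namespace DynH

variable {V E C : Type} [Fintype V] [Fintype E] [DecidableEq V] [DecidableEq E]

/-- Bundled data of a Hamiltonian cycle in `L_n^H(G)`, presented as a periodic
walk function `F : ℕ → W`. -/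
structure CycCtx (G : Multigraph V E) (adjH : C → C → Prop) (c : E → C) (n : ℕ) : Type where
  F : ℕ → L2V G ⊕ E × Fin (n - 2)
  N : ℕ
  hn : 3 ≤ n
  hNn : N = n * Fintype.card E
  hE : 0 < Fintype.card E
  adj : ∀ k, (LnGraph G adjH c n).Adj (F k) (F (k + 1))
  inj : ∀ k l, F k = F l ↔ k % N = l % N
  surj : ∀ w, ∃ k, F k = w

namespace CycCtx

variable {G : Multigraph V E} {adjH : C → C → Prop} {c : E → C} {n : ℕ}
variable (X : CycCtx G adjH c n)

lemma hnN : n ≤ X.N := by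
  rw [X.hNn]
  have := X.hE
  nlinarith

lemma hN3 : 3 ≤ X.N := le_trans X.hn X.hnN

/-- `F` is `N`-periodic. -/
lemma per (k t : ℕ) : X.F (k + t * X.N) = X.F k := by
  rw [X.inj, Nat.add_mul_mod_self_right]

lemma eq_of_modeq {k l : ℕ} (h : k % X.N = l % X.N) : X.F k = X.F l := (X.inj k l).2 h

/-- Distinct positions at distance `0 < d < N` carry distinct vertices. -/
lemma ne_of_dist {k d : ℕ} (h0 : 0 < d) (hd : d < X.N) : X.F (k + d) ≠ X.F k := by
  intro h
  rw [X.inj] at h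
  have : d % X.N = 0 % X.N := Nat.ModEq.add_left_cancel' k h
  rw [Nat.zero_mod, Nat.mod_eq_of_lt hd] at this
  omega

/-- Cancellation: positions `q + a` and `q + b` agree iff `a ≡ b (mod N)`. -/
lemma modeq_cancel {q a b : ℕ} (h : (q + a) % X.N = (q + b) % X.N) : a % X.N = b % X.N :=
  Nat.ModEq.add_left_cancel' q h

/-- If a vertex has (at most) two neighbours `α ≠ β`, then on the cycle its successor
and predecessor are `α` and `β` in one of the two orders. -/
lemma two_nbrs {k : ℕ} {α β : L2V G ⊕ E × Fin (n - 2)}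
    (hnb : ∀ w, (LnGraph G adjH c n).Adj w (X.F k) → w = α ∨ w = β) :
    (X.F (k + 1) = α ∧ X.F (k + (X.N - 1)) = β) ∨
    (X.F (k + 1) = β ∧ X.F (k + (X.N - 1)) = α) := by
  have hN3 := X.hN3
  have hsucc : (LnGraph G adjH c n).Adj (X.F (k + 1)) (X.F k) := (X.adj k).symm
  have hpred : (LnGraph G adjH c n).Adj (X.F (k + (X.N - 1))) (X.F k) := by
    have := X.adj (k + (X.N - 1))
    have heq : X.F (k + (X.N - 1) + 1) = X.F k := by
      have h1 : k + (X.N - 1) + 1 = k + 1 * X.N := by omega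
      rw [h1, X.per]
    rwa [heq] at this
  have hne : X.F (k + 1) ≠ X.F (k + (X.N - 1)) := by
    have h1 : k + (X.N - 1) = (k + 1) + (X.N - 2) := by omega
    rw [h1]
    exact (X.ne_of_dist (by omega) (by omega)).symm
  rcases hnb _ hsucc with h1 | h1 <;> rcases hnb _ hpred with h2 | h2
  · exact absurd (h1.trans h2.symm) hne
  · exact Or.inl ⟨h1, h2⟩
  · exact Or.inr ⟨h1, h2⟩
  · exact absurd (h1.trans h2.symm) hne

/-- Characterization of the neighbours of an internal path vertex. -/
lemma nbhd_pv {e : E} {i : Fin (n - 2)} {w : L2V G ⊕ E × Fin (n - 2)}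
    (h : (LnGraph G adjH c n).Adj w (Sum.inr (e, i))) :
    (w = Sum.inl ⟨(G.fst e, e), Or.inl rfl⟩ ∧ i.val = 0) ∨
    (w = Sum.inl ⟨(G.snd e, e), Or.inr rfl⟩ ∧ i.val = n - 3) ∨
    (∃ j : Fin (n - 2), w = Sum.inr (e, j) ∧ (j.val + 1 = i.val ∨ i.val + 1 = j.val)) := by
  rcases w with p | ⟨g, j⟩
  · obtain ⟨h1, h2⟩ := adj_inl_inr h
    rcases h2 with ⟨h3, h4⟩ | ⟨h3, h4⟩
    · refine Or.inl ⟨?_, h4⟩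
      congr 1
      exact Subtype.ext (Prod.ext h3 h1)
    · refine Or.inr (Or.inl ⟨?_, h4⟩)
      congr 1
      exact Subtype.ext (Prod.ext h3 h1)
  · obtain ⟨h1, h2⟩ := adj_inr_inr h
    subst h1
    exact Or.inr (Or.inr ⟨j, rfl, h2⟩)

end CycCtx

end DynH
namespace DynH

variable {V E C : Type} [Fintype V] [Fintype E] [DecidableEq V] [DecidableEq E]

namespace CycCtx

variable {G : Multigraph V E} {adjH : C → C → Prop} {c : E → C} {n : ℕ}
variable (X : CycCtx G adjH c n)

lemma mod_inj {a b : ℕ} (ha : a < X.N) (hb : b < X.N) (h : a % X.N = b % X.N) : a = b := by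
  rwa [Nat.mod_eq_of_lt ha, Nat.mod_eq_of_lt hb] at h

lemma dist_inj {q a b : ℕ} (ha : a < X.N) (hb : b < X.N)
    (h : X.F (q + a) = X.F (q + b)) : a = b :=
  X.mod_inj ha hb (X.modeq_cancel ((X.inj _ _).1 h))

end CycCtx

section Nbhd

variable {G : Multigraph V E} {adjH : C → C → Prop} {c : E → C} {n : ℕ} {e : E}

open CycCtx

lemma nbhd_single (hm : n - 2 = 1) {i : Fin (n - 2)} :
    ∀ w, (LnGraph G adjH c n).Adj w (Sum.inr (e, i)) →
      w = Sum.inl ⟨(G.fst e, e), Or.inl rfl⟩ ∨ w = Sum.inl ⟨(G.snd e, e), Or.inr rfl⟩ := by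
  intro w hw
  rcases nbhd_pv hw with ⟨h, _⟩ | ⟨h, _⟩ | ⟨j, h, hj⟩
  · exact Or.inl h
  · exact Or.inr h
  · exfalso
    have hi := i.isLt
    have hj' := j.isLt
    omega

lemma nbhd_zero (hm : 2 ≤ n - 2) :
    ∀ w, (LnGraph G adjH c n).Adj w (Sum.inr (e, ⟨0, by omega⟩)) →
      w = Sum.inl ⟨(G.fst e, e), Or.inl rfl⟩ ∨ w = Sum.inr (e, ⟨1, by omega⟩) := by
  intro w hw
  rcases nbhd_pv hw with ⟨h, _⟩ | ⟨h, hv⟩ | ⟨j, h, hj⟩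
  · exact Or.inl h
  · exfalso
    simp only at hv
    omega
  · simp only at hj
    have : j = (⟨1, by omega⟩ : Fin (n - 2)) := by
      apply Fin.ext
      simp only
      omega
    exact Or.inr (h.trans (by rw [this]))

lemma nbhd_last (hm : 2 ≤ n - 2) :
    ∀ w, (LnGraph G adjH c n).Adj w (Sum.inr (e, ⟨n - 3, by omega⟩)) →
      w = Sum.inr (e, ⟨n - 4, by omega⟩) ∨ w = Sum.inl ⟨(G.snd e, e), Or.inr rfl⟩ := by
  intro w hw
  rcases nbhd_pv hw with ⟨h, hv⟩ | ⟨h, _⟩ | ⟨j, h, hj⟩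
  · exfalso
    simp only at hv
    omega
  · exact Or.inr h
  · simp only at hj
    have hj' := j.isLt
    rcases hj with hj | hj
    · have : j = (⟨n - 4, by omega⟩ : Fin (n - 2)) := by
        apply Fin.ext; simp only; omega
      exact Or.inl (h.trans (by rw [this]))
    · exfalso; omega

lemma nbhd_mid {i : ℕ} (hi0 : 0 < i) (hi1 : i + 1 < n - 2) :
    ∀ w, (LnGraph G adjH c n).Adj w (Sum.inr (e, ⟨i, by omega⟩)) →
      w = Sum.inr (e, ⟨i - 1, by omega⟩) ∨ w = Sum.inr (e, ⟨i + 1, by omega⟩) := by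
  intro w hw
  rcases nbhd_pv hw with ⟨h, hv⟩ | ⟨h, hv⟩ | ⟨j, h, hj⟩
  · exfalso; simp only at hv; omega
  · exfalso; simp only at hv; omega
  · simp only at hj
    rcases hj with hj | hj
    · have : j = (⟨i - 1, by omega⟩ : Fin (n - 2)) := by
        apply Fin.ext; simp only; omega
      exact Or.inl (h.trans (by rw [this]))
    · have : j = (⟨i + 1, by omega⟩ : Fin (n - 2)) := by
        apply Fin.ext; simp only; omega
      exact Or.inr (h.trans (by rw [this]))

end Nbhd

end DynH
namespace DynH

variable {V E C : Type} [Fintype V] [Fintype E] [DecidableEq V] [DecidableEq E]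

namespace CycCtx

variable {G : Multigraph V E} {adjH : C → C → Prop} {c : E → C} {n : ℕ}
variable (X : CycCtx G adjH c n)

lemma pv_eq {e : E} {a b : ℕ} {ha : a < n - 2} {hb : b < n - 2} (h : a = b) :
    (Sum.inr (e, ⟨a, ha⟩) : L2V G ⊕ E × Fin (n - 2)) = Sum.inr (e, ⟨b, hb⟩) := by
  subst h; rfl

lemma pv_inj {e : E} {a b : ℕ} {ha : a < n - 2} {hb : b < n - 2}
    (h : (Sum.inr (e, ⟨a, ha⟩) : L2V G ⊕ E × Fin (n - 2)) = Sum.inr (e, ⟨b, hb⟩)) : a = b := by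
  simpa using h

/-- The cycle traverses a full block for edge `e`: it enters at the incidence of `x`,
walks along the internal path, and exits at the incidence of `y`. -/
def BlockAt (e : E) (x y : V) (q : ℕ) : Prop :=
  G.joins e x y ∧
  (∃ hx : G.inc x e, X.F q = Sum.inl ⟨(x, e), hx⟩) ∧
  (∃ hy : G.inc y e, X.F (q + (n - 2) + 1) = Sum.inl ⟨(y, e), hy⟩) ∧
  ∀ i : ℕ, i < n - 2 → ∃ j : Fin (n - 2), X.F (q + 1 + i) = Sum.inr (e, j)

lemma trav (e : E) : ∃ q x y, X.BlockAt e x y q := by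
  have hn := X.hn
  have hN3 := X.hN3
  have hnle := X.hnN
  have hm1 : 1 ≤ n - 2 := by omega
  obtain ⟨k₀, hk₀⟩ := X.surj (Sum.inr (e, ⟨0, by omega⟩))
  by_cases hm : n - 2 = 1
  · -- n = 3 : single internal vertex
    rcases X.two_nbrs (k := k₀) (fun w hw => nbhd_single hm w (hk₀ ▸ hw)) with
      ⟨h1, h2⟩ | ⟨h1, h2⟩
    · -- successor is fst-incidence, predecessor is snd-incidence : entry snd, exit fst
      refine ⟨k₀ + (X.N - 1), G.snd e, G.fst e, Or.inr ⟨rfl, rfl⟩, ⟨Or.inr rfl, h2⟩,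
        ⟨Or.inl rfl, ?_⟩, ?_⟩
      · have harith : k₀ + (X.N - 1) + (n - 2) + 1 = (k₀ + 1) + 1 * X.N := by omega
        rw [harith, X.per]; exact h1
      · intro i hi
        have hi0 : i = 0 := by omega
        subst hi0
        refine ⟨⟨0, by omega⟩, ?_⟩
        have harith : k₀ + (X.N - 1) + 1 + 0 = k₀ + 1 * X.N := by omega
        rw [harith, X.per]; exact hk₀
    · -- entry fst, exit snd
      refine ⟨k₀ + (X.N - 1), G.fst e, G.snd e, Or.inl ⟨rfl, rfl⟩, ⟨Or.inl rfl, h2⟩,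
        ⟨Or.inr rfl, ?_⟩, ?_⟩
      · have harith : k₀ + (X.N - 1) + (n - 2) + 1 = (k₀ + 1) + 1 * X.N := by omega
        rw [harith, X.per]; exact h1
      · intro i hi
        have hi0 : i = 0 := by omega
        subst hi0
        refine ⟨⟨0, by omega⟩, ?_⟩
        have harith : k₀ + (X.N - 1) + 1 + 0 = k₀ + 1 * X.N := by omega
        rw [harith, X.per]; exact hk₀
  · -- n ≥ 4 : at least two internal vertices
    have hm2 : 2 ≤ n - 2 := by omega
    rcases X.two_nbrs (k := k₀) (fun w hw => nbhd_zero hm2 w (hk₀ ▸ hw)) with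
      ⟨h1, h2⟩ | ⟨h1, h2⟩
    · -- DESCENDING: successor of pv 0 is fst-incidence, predecessor is pv 1
      -- F (k₀ + i * (N-1)) = pv i
      have desc : ∀ i (hi2 : i < n - 2), X.F (k₀ + i * (X.N - 1)) = Sum.inr (e, ⟨i, by omega⟩) := by
        intro i
        induction i using Nat.strong_induction_on with
        | _ i ih =>
          intro hi
          by_cases hi0 : i = 0
          · subst hi0
            have harith : k₀ + 0 * (X.N - 1) = k₀ := by omega
            rw [harith]; exact hk₀
          by_cases hi1 : i = 1
          · subst hi1
            have harith : k₀ + 1 * (X.N - 1) = k₀ + (X.N - 1) := by omega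
            rw [harith]; exact h2
          -- i ≥ 2
          have hprev : X.F (k₀ + (i-1) * (X.N - 1)) = Sum.inr (e, ⟨i-1, by omega⟩) :=
            ih (i-1) (by omega) (by omega)
          have hprev2 : X.F (k₀ + (i-2) * (X.N - 1)) = Sum.inr (e, ⟨i-2, by omega⟩) :=
            ih (i-2) (by omega) (by omega)
          have hsucc : X.F (k₀ + (i-1) * (X.N - 1) + 1) = Sum.inr (e, ⟨i-2, by omega⟩) := by
            have harith : k₀ + (i-1) * (X.N - 1) + 1 = (k₀ + (i-2) * (X.N - 1)) + 1 * X.N := by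
              obtain ⟨j, hj⟩ : ∃ j, i = j + 2 := ⟨i - 2, by omega⟩
              subst hj
              obtain ⟨M, hM⟩ : ∃ M, X.N = M + 1 := ⟨X.N - 1, by omega⟩
              have e1 : j + 2 - 1 = j + 1 := by omega
              have e2 : j + 2 - 2 = j := by omega
              have e3 : M + 1 - 1 = M := by omega
              rw [hM, e1, e2, e3]
              ring
            rw [harith, X.per]; exact hprev2
          rcases X.two_nbrs (k := k₀ + (i-1) * (X.N - 1))
              (fun w hw => nbhd_mid (i := i - 1) (by omega) (by omega) w (hprev ▸ hw)) with
            ⟨ha, hb⟩ | ⟨ha, hb⟩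
          · -- pred = pv (i-1+1) = pv i : this is the goal
            have harith : k₀ + (i-1) * (X.N - 1) + (X.N - 1) = k₀ + i * (X.N - 1) := by
              obtain ⟨j, hj⟩ : ∃ j, i = j + 2 := ⟨i - 2, by omega⟩
              subst hj
              obtain ⟨M, hM⟩ : ∃ M, X.N = M + 1 := ⟨X.N - 1, by omega⟩
              have e1 : j + 2 - 1 = j + 1 := by omega
              have e3 : M + 1 - 1 = M := by omega
              rw [hM, e1, e3]
              ring
            rw [harith] at hb
            rw [hb]
            exact pv_eq (by omega)
          · -- succ = pv (i-1+1), but succ = pv (i-2) : contradiction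
            exfalso
            have := pv_inj (hsucc.symm.trans ha)
            omega
      -- entry of the block on the snd side
      have hQm : X.F (k₀ + (n-2) * (X.N - 1)) = Sum.inl ⟨(G.snd e, e), Or.inr rfl⟩ := by
        have hlast : X.F (k₀ + (n-3) * (X.N - 1)) = Sum.inr (e, ⟨n-3, by omega⟩) :=
          desc (n-3) (by omega)
        have hprev2 : X.F (k₀ + (n-4) * (X.N - 1)) = Sum.inr (e, ⟨n-4, by omega⟩) :=
          desc (n-4) (by omega)
        have hsucc : X.F (k₀ + (n-3) * (X.N - 1) + 1) = Sum.inr (e, ⟨n-4, by omega⟩) := by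
          have harith : k₀ + (n-3) * (X.N - 1) + 1 = (k₀ + (n-4) * (X.N - 1)) + 1 * X.N := by
            obtain ⟨M, hM⟩ : ∃ M, X.N = M + 1 := ⟨X.N - 1, by omega⟩
            have e1 : n - 3 = (n - 4) + 1 := by omega
            have e3 : M + 1 - 1 = M := by omega
            rw [hM, e1, e3]
            ring
          rw [harith, X.per]; exact hprev2
        rcases X.two_nbrs (k := k₀ + (n-3) * (X.N - 1))
            (fun w hw => nbhd_last hm2 w (hlast ▸ hw)) with ⟨ha, hb⟩ | ⟨ha, hb⟩
        · -- pred = snd-incidence : goal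
          have harith : k₀ + (n-3) * (X.N - 1) + (X.N - 1) = k₀ + (n-2) * (X.N - 1) := by
            obtain ⟨M, hM⟩ : ∃ M, X.N = M + 1 := ⟨X.N - 1, by omega⟩
            have e1 : n - 2 = (n - 3) + 1 := by omega
            have e3 : M + 1 - 1 = M := by omega
            rw [hM, e1, e3]
            ring
          rw [harith] at hb
          exact hb
        · exfalso
          rw [hsucc] at ha
          simp at ha
      -- assemble the block, entry snd, exit fst
      refine ⟨k₀ + (n-2) * (X.N - 1), G.snd e, G.fst e, Or.inr ⟨rfl, rfl⟩,
        ⟨Or.inr rfl, hQm⟩, ⟨Or.inl rfl, ?_⟩, ?_⟩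
      · have harith : k₀ + (n-2) * (X.N - 1) + (n - 2) + 1 = (k₀ + 1) + (n-2) * X.N := by
          have hmul : (n-2) * (X.N - 1) + (n-2) = (n-2) * X.N := by
            rw [← Nat.mul_succ]
            congr 1
            omega
          omega
        rw [harith, X.per]; exact h1
      · intro i hi
        refine ⟨⟨n - 3 - i, by omega⟩, ?_⟩
        have harith : k₀ + (n-2) * (X.N - 1) + 1 + i = (k₀ + (n-3-i) * (X.N - 1)) + (i+1) * X.N := by
          obtain ⟨M, hM⟩ : ∃ M, X.N = M + 1 := ⟨X.N - 1, by omega⟩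
          have ha2 : n - 2 = (n - 3 - i) + i + 1 := by omega
          have e3 : M + 1 - 1 = M := by omega
          rw [hM, ha2, e3]
          ring
        rw [harith, X.per]
        exact desc (n - 3 - i) (by omega)
    · -- ASCENDING: successor of pv 0 is pv 1, predecessor is fst-incidence
      have asc : ∀ i (hi2 : i < n - 2), X.F (k₀ + i) = Sum.inr (e, ⟨i, by omega⟩) := by
        intro i
        induction i using Nat.strong_induction_on with
        | _ i ih =>
          intro hi
          by_cases hi0 : i = 0
          · subst hi0; rw [Nat.add_zero]; exact hk₀
          by_cases hi1 : i = 1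
          · subst hi1; exact h1
          -- i ≥ 2
          have hprev : X.F (k₀ + (i-1)) = Sum.inr (e, ⟨i-1, by omega⟩) :=
            ih (i-1) (by omega) (by omega)
          have hprev2 : X.F (k₀ + (i-2)) = Sum.inr (e, ⟨i-2, by omega⟩) :=
            ih (i-2) (by omega) (by omega)
          rcases X.two_nbrs (k := k₀ + (i-1))
              (fun w hw => nbhd_mid (i := i - 1) (by omega) (by omega) w (hprev ▸ hw)) with
            ⟨ha, hb⟩ | ⟨ha, hb⟩
          · -- succ = pv (i-2) : contradiction with injectivity
            exfalso
            have harith : k₀ + (i-1) + 1 = k₀ + i := by omega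
            rw [harith] at ha
            have heq : X.F (k₀ + i) = X.F (k₀ + (i-2)) := by
              rw [ha, hprev2]
              exact pv_eq rfl
            have := X.dist_inj (a := i) (b := i - 2) (by omega) (by omega) heq
            omega
          · -- succ = pv (i-1+1) = pv i : goal
            have harith : k₀ + (i-1) + 1 = k₀ + i := by omega
            rw [harith] at ha
            rw [ha]
            exact pv_eq (by omega)
      have hend : X.F (k₀ + (n - 2)) = Sum.inl ⟨(G.snd e, e), Or.inr rfl⟩ := by
        have hlast : X.F (k₀ + (n-3)) = Sum.inr (e, ⟨n-3, by omega⟩) := asc (n-3) (by omega)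
        have hprev2 : X.F (k₀ + (n-4)) = Sum.inr (e, ⟨n-4, by omega⟩) := asc (n-4) (by omega)
        rcases X.two_nbrs (k := k₀ + (n-3))
            (fun w hw => nbhd_last hm2 w (hlast ▸ hw)) with ⟨ha, hb⟩ | ⟨ha, hb⟩
        · -- succ = pv (n-4) : contradiction
          exfalso
          have harith : k₀ + (n-3) + 1 = k₀ + (n-2) := by omega
          rw [harith] at ha
          have heq : X.F (k₀ + (n-2)) = X.F (k₀ + (n-4)) := by rw [ha, hprev2]
          have := X.dist_inj (a := n-2) (b := n-4) (by omega) (by omega) heq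
          omega
        · have harith : k₀ + (n-3) + 1 = k₀ + (n-2) := by omega
          rw [harith] at ha
          exact ha
      -- assemble the block, entry fst, exit snd
      refine ⟨k₀ + (X.N - 1), G.fst e, G.snd e, Or.inl ⟨rfl, rfl⟩,
        ⟨Or.inl rfl, h2⟩, ⟨Or.inr rfl, ?_⟩, ?_⟩
      · have harith : k₀ + (X.N - 1) + (n - 2) + 1 = (k₀ + (n-2)) + 1 * X.N := by omega
        rw [harith, X.per]; exact hend
      · intro i hi
        refine ⟨⟨i, by omega⟩, ?_⟩
        have harith : k₀ + (X.N - 1) + 1 + i = (k₀ + i) + 1 * X.N := by omega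
        rw [harith, X.per]
        exact asc i hi

end CycCtx

end DynH
namespace DynH

variable {V E C : Type} [Fintype V] [Fintype E] [DecidableEq V] [DecidableEq E]

lemma parallel_inc {G : Multigraph V E} {e g : E} (h : G.parallel e g) {z : V}
    (hz : G.inc z g) : G.inc z e := by
  rcases h with ⟨h1, h2⟩ | ⟨h1, h2⟩ <;> rcases hz with hz | hz
  · exact Or.inl (h1.trans hz)
  · exact Or.inr (h2.trans hz)
  · exact Or.inr (h2.trans hz)
  · exact Or.inl (h1.trans hz)

namespace CycCtx

variable {G : Multigraph V E} {adjH : C → C → Prop} {c : E → C} {n : ℕ}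
variable (X : CycCtx G adjH c n)

lemma block_congr {e : E} {x y : V} {q q' : ℕ} (h : X.BlockAt e x y q)
    (hq : q % X.N = q' % X.N) : X.BlockAt e x y q' := by
  obtain ⟨hj, ⟨hx, h1⟩, ⟨hy, h2⟩, h3⟩ := h
  have key : ∀ d : ℕ, X.F (q' + d) = X.F (q + d) := fun d =>
    X.eq_of_modeq (Nat.ModEq.add_right d hq.symm)
  refine ⟨hj, ⟨hx, ?_⟩, ⟨hy, ?_⟩, ?_⟩
  · have := key 0
    simpa using this.trans (by simpa using h1)
  · have := key ((n-2) + 1)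
    rw [show q' + (n-2) + 1 = q' + ((n-2)+1) by omega, this,
      show q + ((n-2)+1) = q + (n-2) + 1 by omega]
    exact h2
  · intro i hi
    obtain ⟨j, hj'⟩ := h3 i hi
    refine ⟨j, ?_⟩
    rw [show q' + 1 + i = q' + (1+i) by omega, key (1+i),
      show q + (1+i) = q + 1 + i by omega]
    exact hj'

lemma block_pv_pos {e : E} {x y : V} {q : ℕ} (hB : X.BlockAt e x y q) {l : ℕ}
    {j : Fin (n - 2)} (hF : X.F l = Sum.inr (e, j)) :
    ∃ i, i < n - 2 ∧ l % X.N = (q + 1 + i) % X.N := by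
  have hn := X.hn
  have hnle := X.hnN
  obtain ⟨_, _, _, h3⟩ := hB
  choose jf hjf using h3
  let f : Fin (n - 2) → Fin (n - 2) := fun i => jf i.val i.isLt
  have hinjf : Function.Injective f := by
    intro i i' h
    have heq : X.F (q + (1 + i.val)) = X.F (q + (1 + i'.val)) := by
      rw [show q + (1 + i.val) = q + 1 + i.val by omega,
        show q + (1 + i'.val) = q + 1 + i'.val by omega, hjf i.val i.isLt, hjf i'.val i'.isLt]
      show Sum.inr (e, f i) = Sum.inr (e, f i')
      rw [h]
    have hi := i.isLt
    have hi' := i'.isLt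
    have := X.dist_inj (a := 1 + i.val) (b := 1 + i'.val) (by omega) (by omega) heq
    exact Fin.ext (by omega)
  have hsurjf : Function.Surjective f := Finite.surjective_of_injective hinjf
  obtain ⟨i, hif⟩ := hsurjf j
  refine ⟨i.val, i.isLt, ?_⟩
  apply (X.inj _ _).1
  rw [hF, hjf i.val i.isLt]
  show Sum.inr (e, j) = Sum.inr (e, f i)
  rw [hif]

lemma exit_succ (hH : Symmetric adjH) {e : E} {x y : V} {q : ℕ} (hB : X.BlockAt e x y q) :
    ∃ p : L2V G, p.val.2 ≠ e ∧ X.F (q + (n - 2) + 2) = Sum.inl p := by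
  have hn := X.hn
  have hnle := X.hnN
  obtain ⟨hy, hFy⟩ := hB.2.2.1
  have hadj := X.adj (q + (n - 2) + 1)
  rcases hF2 : X.F (q + (n - 2) + 1 + 1) with p | ⟨g, j⟩
  · rw [hFy, hF2] at hadj
    obtain ⟨hne, _⟩ := adj_inl_inl hH X.hn hadj
    exact ⟨p, fun h => hne h.symm, rfl⟩
  · exfalso
    rw [hFy, hF2] at hadj
    obtain ⟨hge, _⟩ := adj_inl_inr hadj
    simp only at hge
    subst hge
    obtain ⟨i, hi, hmod⟩ := X.block_pv_pos hB hF2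
    rw [show q + (n-2) + 1 + 1 = q + ((n-2) + 2) by omega,
      show q + 1 + i = q + (1 + i) by omega] at hmod
    have hmod2 : ((n-2) + 2) % X.N = (1 + i) % X.N := X.modeq_cancel hmod
    rcases Nat.lt_or_ge ((n-2) + 2) X.N with hlt | hge'
    · rw [Nat.mod_eq_of_lt hlt, Nat.mod_eq_of_lt (by omega)] at hmod2
      omega
    · have hNeq : X.N = (n-2) + 2 := by omega
      rw [hNeq] at hmod2
      rw [Nat.mod_self, Nat.mod_eq_of_lt (by omega)] at hmod2
      omega

lemma block_step (hH : Symmetric adjH) {e : E} {x y : V} {q : ℕ}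
    (hB : X.BlockAt e x y q) :
    ∃ e' x' y', e' ≠ e ∧ X.BlockAt e' x' y' (q + n) ∧
      DynStep G adjH c (x, y, e) (x', y', e') := by
  have hn := X.hn
  have hnle := X.hnN
  obtain ⟨p, hpe, hFp⟩ := X.exit_succ hH hB
  obtain ⟨q₂, x₂, y₂, hB₂⟩ := X.trav p.val.2
  have hqn : q + n = q + (n - 2) + 2 := by omega
  obtain ⟨hy, hFy⟩ := hB.2.2.1
  rcases mem_of_joins hB₂.1 p.prop with hpx | hpy
  · -- p is the entry incidence of the block of e' := p.val.2
    obtain ⟨hx2, hFq2⟩ := hB₂.2.1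
    have hpeq : Sum.inl p = X.F q₂ := by
      rw [hFq2]
      congr 1
      exact Subtype.ext (Prod.ext hpx rfl)
    have hmod : (q + n) % X.N = q₂ % X.N := (X.inj _ _).1 (by rw [hqn, hFp, hpeq])
    have hB₂' : X.BlockAt p.val.2 x₂ y₂ (q + n) := X.block_congr hB₂ hmod.symm
    -- the L₂ adjacency between exit of e and entry of e'
    have hadj := X.adj (q + (n - 2) + 1)
    rw [hFy, show q + (n-2) + 1 + 1 = q + (n-2) + 2 by omega, hFp] at hadj
    obtain ⟨hne, hcase⟩ := adj_inl_inl hH X.hn hadj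
    simp only at hne hcase
    rcases hcase with ⟨hv, hcol⟩ | ⟨hv, hpar⟩
    · exact ⟨p.val.2, x₂, y₂, fun h => hne h.symm, hB₂',
        Or.inl ⟨hv.trans hpx, hcol⟩⟩
    · -- lane change between parallel edges
      have hx2e : G.inc x₂ e := parallel_inc hpar (hpx ▸ p.prop)
      have hy2e : G.inc y₂ e := by
        rcases hB₂.1 with ⟨h1, h2⟩ | ⟨h1, h2⟩
        · exact parallel_inc hpar (Or.inr h2)
        · exact parallel_inc hpar (Or.inl h1)
      have hx2x : x₂ = x := by
        rcases mem_of_joins hB.1 hx2e with h | h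
        · exact h
        · exact absurd (hpx.trans h).symm hv
      have hy2y : y₂ = y := by
        rcases mem_of_joins hB.1 hy2e with h | h
        · exfalso
          exact joins_ne hB₂.1 (hx2x.trans h.symm)
        · exact h
      exact ⟨p.val.2, x₂, y₂, fun h => hne h.symm, hB₂',
        Or.inr ⟨hx2x.symm, hy2y.symm, hne, hpar⟩⟩
  · -- p would be the exit incidence of the block of e' : impossible
    exfalso
    obtain ⟨hy2, hFq2⟩ := hB₂.2.2.1
    have hpeq : Sum.inl p = X.F (q₂ + (n-2) + 1) := by
      rw [hFq2]
      congr 1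
      exact Subtype.ext (Prod.ext hpy rfl)
    have hmod : (q + n) % X.N = (q₂ + (n-2) + 1) % X.N := (X.inj _ _).1 (by rw [hqn, hFp, hpeq])
    -- compare the predecessors
    have hNpos : 1 ≤ X.N := by omega
    have hkey : X.F (q + (n-2) + 1) = X.F (q₂ + (n-2)) := by
      have h1 : X.F (q + (n-2) + 1) = X.F (q + n + (X.N - 1)) := by
        apply X.eq_of_modeq
        have : q + n + (X.N - 1) = (q + (n-2) + 1) + 1 * X.N := by omega
        rw [this, Nat.add_mul_mod_self_right]
      have h2 : X.F (q + n + (X.N - 1)) = X.F (q₂ + (n-2) + 1 + (X.N - 1)) :=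
        X.eq_of_modeq (Nat.ModEq.add_right _ hmod)
      have h3 : X.F (q₂ + (n-2) + 1 + (X.N - 1)) = X.F (q₂ + (n-2)) := by
        apply X.eq_of_modeq
        have : q₂ + (n-2) + 1 + (X.N - 1) = (q₂ + (n-2)) + 1 * X.N := by omega
        rw [this, Nat.add_mul_mod_self_right]
      exact (h1.trans h2).trans h3
    obtain ⟨j, hj⟩ := hB₂.2.2.2 (n - 3) (by omega)
    rw [show q₂ + 1 + (n-3) = q₂ + (n-2) by omega] at hj
    rw [hFy, hj] at hkey
    exact absurd hkey (by simp)

lemma block_unique {e e' : E} {x y x' y' : V} {q : ℕ}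
    (h1 : X.BlockAt e x y q) (h2 : X.BlockAt e' x' y' q) : e = e' ∧ x = x' ∧ y = y' := by
  obtain ⟨_, ⟨hx, hF1⟩, ⟨hy, hG1⟩, _⟩ := h1
  obtain ⟨_, ⟨hx', hF2⟩, ⟨hy', hG2⟩, _⟩ := h2
  have hA := hF1.symm.trans hF2
  have hB := hG1.symm.trans hG2
  replace hA := Sum.inl.inj hA; replace hB := Sum.inl.inj hB
  have hA' : (x, e) = (x', e') := congrArg Subtype.val hA
  have hB' : (y, e) = (y', e') := congrArg Subtype.val hB
  exact ⟨(Prod.ext_iff.1 hA').2, (Prod.ext_iff.1 hA').1, (Prod.ext_iff.1 hB').1⟩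

end CycCtx

end DynH
namespace DynH

/-- If `L_n^H(G)` is Hamiltonian for some `n ≥ 3`, then the `H`-colored multigraph
`G` has a closed Euler dynamic `H`-trail. -/
theorem Ln_hamiltonian_imp_euler_dynHTrail {V E C : Type}
    [Fintype V] [Fintype E] [DecidableEq V] [DecidableEq E]
    (G : Multigraph V E) (adjH : C → C → Prop) (hH : Symmetric adjH) (c : E → C)
    (hHam : ∃ n : ℕ, 3 ≤ n ∧ (LnGraph G adjH c n).IsHamiltonian) :
    ∃ L : List (V × V × E),
      IsClosedDynHTrail G adjH c L ∧ ∀ e : E, e ∈ edgesOf L := by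
  classical
  obtain ⟨n, hn, hHam⟩ := hHam
  have hcardW : Fintype.card (L2V G ⊕ E × Fin (n - 2)) = n * Fintype.card E :=
    card_W G (by omega)
  have hcard1 : Fintype.card (L2V G ⊕ E × Fin (n - 2)) ≠ 1 := by
    rw [hcardW]
    intro h
    have h2 : n ∣ 1 := ⟨Fintype.card E, h.symm⟩
    have := Nat.le_of_dvd one_pos h2
    omega
  obtain ⟨F, hF1, hF3, hF2⟩ := exists_cycFn hHam hcard1
  have hE : 0 < Fintype.card E := by
    rcases F 0 with p | ⟨e, i⟩
    · exact Fintype.card_pos_iff.mpr ⟨p.val.2⟩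
    · exact Fintype.card_pos_iff.mpr ⟨e⟩
  let X : CycCtx G adjH c n :=
    ⟨F, Fintype.card (L2V G ⊕ E × Fin (n - 2)), hn, hcardW, hE, hF1, hF3, hF2⟩
  obtain ⟨e₀⟩ : Nonempty E := Fintype.card_pos_iff.mp hE
  obtain ⟨q₀, x₀, y₀, hB₀⟩ := X.trav e₀
  have hblocks : ∀ t : ℕ, ∃ exy : E × V × V, X.BlockAt exy.1 exy.2.1 exy.2.2 (q₀ + t * n) := by
    intro t
    induction t with
    | zero =>
      refine ⟨(e₀, x₀, y₀), ?_⟩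
      rw [show q₀ + 0 * n = q₀ by omega]
      exact hB₀
    | succ t ih =>
      obtain ⟨⟨e, x, y⟩, hB⟩ := ih
      obtain ⟨e', x', y', _, hB', _⟩ := X.block_step hH hB
      refine ⟨(e', x', y'), ?_⟩
      rw [show q₀ + (t + 1) * n = q₀ + t * n + n by ring]
      exact hB'
  choose tr hBt using hblocks
  have hstep : ∀ t, DynStep G adjH c ((tr t).2.1, (tr t).2.2, (tr t).1)
      ((tr (t + 1)).2.1, (tr (t + 1)).2.2, (tr (t + 1)).1) := by
    intro t
    obtain ⟨e', x', y', hne, hB', hD⟩ := X.block_step hH (hBt t)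
    have hB'' : X.BlockAt e' x' y' (q₀ + (t + 1) * n) := by
      rw [show q₀ + (t + 1) * n = q₀ + t * n + n by ring]
      exact hB'
    obtain ⟨he, hx, hy⟩ := X.block_unique hB'' (hBt (t + 1))
    rw [← he, ← hx, ← hy]
    exact hD
  set K := Fintype.card E with hKdef
  have hNK : X.N = n * K := hcardW
  have hn3 : 3 ≤ n := hn
  -- injectivity of the edge sequence on [0, K)
  have hedinj : ∀ t t', t < K → t' < K → (tr t).1 = (tr t').1 → t = t' := by
    have main : ∀ t t', t ≤ t' → t' < K → (tr t).1 = (tr t').1 → t = t' := by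
      intro t t' hle hK' hee
      obtain ⟨s, rfl⟩ : ∃ s, t' = t + s := ⟨t' - t, by omega⟩
      by_contra hne'
      have hs : 0 < s := by omega
      obtain ⟨j, hj⟩ := (hBt t).2.2.2 0 (by omega)
      rw [hee] at hj
      obtain ⟨i, hi, hmod⟩ := X.block_pv_pos (hBt (t + s)) hj
      rw [show q₀ + t * n + 1 + 0 = (q₀ + t * n + 1) + 0 by omega,
        show q₀ + (t + s) * n + 1 + i = (q₀ + t * n + 1) + (s * n + i) by ring] at hmod
      have h0 : (0 : ℕ) % X.N = (s * n + i) % X.N := X.modeq_cancel hmod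
      have hsn : s * n + i < X.N := by
        obtain ⟨K', hK'⟩ : ∃ K', K = K' + 1 := ⟨K - 1, by omega⟩
        have h1 : s ≤ K' := by omega
        have h2 : s * n ≤ K' * n := Nat.mul_le_mul_right n h1
        have h3 : n * (K' + 1) = K' * n + n := by ring
        have h4 : X.N = n * (K' + 1) := by rw [hNK, hK']
        omega
      rw [Nat.zero_mod, Nat.mod_eq_of_lt hsn] at h0
      have : 1 * n ≤ s * n := Nat.mul_le_mul_right n hs
      omega
    intro t t' h1 h2 hee
    rcases Nat.le_total t t' with h | h
    · exact main t t' h h2 hee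
    · exact (main t' t h h1 hee.symm).symm
  -- the wrap-around
  have hwrap : tr K = tr 0 := by
    have hB0' : X.BlockAt (tr 0).1 (tr 0).2.1 (tr 0).2.2 (q₀ + K * n) := by
      apply X.block_congr (hBt 0)
      rw [show q₀ + 0 * n = q₀ by omega,
        show q₀ + K * n = q₀ + 1 * X.N by rw [hNK]; ring, Nat.add_mul_mod_self_right]
    obtain ⟨he, hx, hy⟩ := X.block_unique (hBt K) hB0'
    exact Prod.ext he (Prod.ext hx hy)
  -- the trail
  have hK0 : 0 < K := hE
  refine ⟨(List.range K).map (fun t => ((tr t).2.1, (tr t).2.2, (tr t).1)), ⟨?_, ?_, ?_, ?_⟩, ?_⟩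
  · -- nonempty
    simp only [ne_eq, List.map_eq_nil_iff, List.range_eq_nil]
    omega
  · -- edges nodup
    have hedges : edgesOf ((List.range K).map (fun t => ((tr t).2.1, (tr t).2.2, (tr t).1)))
        = (List.range K).map (fun t => (tr t).1) := by
      simp [edgesOf, List.map_map, Function.comp]
    rw [hedges]
    refine List.Nodup.map_on ?_ List.nodup_range
    intro t ht t' ht' h
    exact hedinj t t' (List.mem_range.1 ht) (List.mem_range.1 ht') h
  · -- good entries
    intro a ha
    obtain ⟨t, _, rfl⟩ := List.mem_map.1 ha
    exact (hBt t).1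
  · -- dynamic steps
    intro pr hpr
    set L := (List.range K).map (fun t => ((tr t).2.1, (tr t).2.2, (tr t).1)) with hL
    have hlen : L.length = K := by simp [hL]
    obtain ⟨i, hilt, hig⟩ := List.mem_iff_getElem.1 hpr
    have hizip : i < K := by
      rw [List.length_zip, List.length_rotate, hlen] at hilt
      omega
    have h1 : (L.zip (L.rotate 1))[i]'hilt = (L[i]'(by omega), (L.rotate 1)[i]'(by
        rw [List.length_rotate]; omega)) := List.getElem_zip
    have h2 : (L.rotate 1)[i]'(by rw [List.length_rotate]; omega)
        = L[(i + 1) % K]'(by rw [hlen]; exact Nat.mod_lt _ hK0) := by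
      have := List.get_rotate L 1 ⟨i, by rw [List.length_rotate]; omega⟩
      simp only [List.get_eq_getElem] at this
      rw [this]
      congr 1
      rw [hlen]
    have hLt : ∀ (t : ℕ) (ht : t < K), L[t]'(by rw [hlen]; exact ht)
        = ((tr t).2.1, (tr t).2.2, (tr t).1) := by
      intro t ht
      simp [hL]
    rw [← hig, h1, h2, hLt i hizip, hLt ((i + 1) % K) (Nat.mod_lt _ hK0)]
    rcases Nat.lt_or_ge (i + 1) K with hlt | hge
    · rw [Nat.mod_eq_of_lt hlt]
      exact hstep i
    · have hiK : i + 1 = K := by omega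
      rw [hiK, Nat.mod_self]
      have := hstep i
      rw [hiK, hwrap] at this
      exact this
  · -- all edges occur
    intro e
    have himg : (Finset.range K).image (fun t => (tr t).1) = Finset.univ := by
      apply Finset.eq_univ_of_card
      rw [Finset.card_image_of_injOn, Finset.card_range]
      intro t ht t' ht' h
      exact hedinj t t' (Finset.mem_range.1 ht) (Finset.mem_range.1 ht') h
    have hmem : e ∈ (Finset.range K).image (fun t => (tr t).1) := by
      rw [himg]; exact Finset.mem_univ e
    obtain ⟨t, ht, rfl⟩ := Finset.mem_image.1 hmem
    simp only [edgesOf, List.map_map, List.mem_map, Function.comp]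
    exact ⟨t, List.mem_range.1 ht |> List.mem_range.2, rfl⟩

end DynH
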